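/- Let k > 1 and let f : ℝ → ℝ be a positive function. For real numbers I* and R* with I* > 0, the pair (I*, R*) satisfies f(R*)·(1 − I* − R*) − k = 0 and (k−1)·I* − R* = 0 if and only if R* ∈ (0, (k−1)/k), I* ∈ (0, 1/k), I* = R*/(k−1), and f(R*) = (k−1)/((k−1)/k − R*). -/

import Mathlib

/-- Characterization of endemic equilibria: a pair (I*, R*) with I* > 0 is an
endemic equilibrium iff R* ∈ (0, (k−1)/k), I* ∈ (0, 1/k), I* = R*/(k−1) and
f(R*) = g(R*) where g(R) = (k−1)/((k−1)/k − R). -/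
theorem sir_endemic_equilibrium_characterization
    (k : ℝ) (hk : 1 < k)
    (f : ℝ → ℝ) (hf_pos : ∀ x, 0 < f x)
    (Istar Rstar : ℝ) (hIstar : 0 < Istar) :
    (f Rstar * (1 - Istar - Rstar) - k = 0 ∧ (k - 1) * Istar - Rstar = 0) ↔
    (Rstar ∈ Set.Ioo 0 ((k - 1) / k) ∧ Istar ∈ Set.Ioo 0 (1 / k) ∧
      Istar = Rstar / (k - 1) ∧
      f Rstar = (k - 1) / ((k - 1) / k - Rstar)) := by
  have hk0 : (0:ℝ) < k := lt_trans one_pos hk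
  have hk1 : (0:ℝ) < k - 1 := by linarith
  constructor
  · rintro ⟨h1, h2⟩
    have hR : Rstar = (k - 1) * Istar := by linarith
    have hRpos : 0 < Rstar := by rw [hR]; positivity
    have hfpos := hf_pos Rstar
    have hS : 0 < 1 - Istar - Rstar := by
      by_contra h
      push_neg at h
      nlinarith [mul_nonpos_of_nonneg_of_nonpos (le_of_lt hfpos) h]
    have hIlt : Istar < 1 / k := by
      rw [lt_div_iff₀ hk0]
      nlinarith
    have hIR : Istar = Rstar / (k - 1) := by
      field_simp [hR]; linarith
    have hRlt : Rstar < (k - 1) / k := by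
      rw [hR, lt_div_iff₀ hk0]
      nlinarith
    refine ⟨⟨hRpos, hRlt⟩, ⟨hIstar, hIlt⟩, hIR, ?_⟩
    have hden : (k - 1) / k - Rstar > 0 := sub_pos.mpr hRlt
    have hden' : (k - 1) / k - Rstar = (k - 1) * (1 - Istar - Rstar) / k := by
      rw [hR]; field_simp; ring
    rw [eq_div_iff (by linarith : (k-1)/k - Rstar ≠ 0), hden']
    field_simp
    nlinarith
  · rintro ⟨⟨hR0, hRk⟩, ⟨_, hIk⟩, hIR, hfR⟩
    have h2 : (k - 1) * Istar - Rstar = 0 := by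
      rw [hIR]; field_simp; ring
    have hden : 0 < (k - 1) / k - Rstar := by linarith
    refine ⟨?_, h2⟩
    have hI : Istar = Rstar / (k - 1) := hIR
    rw [hfR]
    have : (1 : ℝ) - Istar - Rstar = k * ((k - 1) / k - Rstar) / (k - 1) := by
      rw [hI]; field_simp; ring
    rw [this]
    have h3 : k - 1 - k * Rstar ≠ 0 := by
      have : Rstar * k < k - 1 := (lt_div_iff₀ hk0).mp hRk
      nlinarith
    field_simp [h3]
    ring
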